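/- Consider a CNN with preactivations h_{i,μ}^{(ℓ)}(X)[n] = b_i^{(ℓ)} + Σ_{j=1}^{C_{ℓ-1}[n]} Σ_{ν∈⟦μ⟧} U_{i,j,ν}^{(ℓ)} z_{j,ν}^{(ℓ-1)}(X)[n], z = φ(h), where for every layer the kernel U^{(ℓ)} ∈ ℝ^{C_ℓ × C_{ℓ-1} × k × k} has a distribution invariant under permutations of its first index and under permutations of its second index, kernels and biases across layers are mutually independent, and biases have iid entries. Fix ℓ ≥ 2, a finite set L of triples (i, X, μ), coefficients α, and let E_{i,j,ν}^{(ℓ)} = σ_W^{-1} √(C_{ℓ-1}) U_{i,j,ν}^{(ℓ)}. Then the random variables γ_j^{(ℓ)}(α, L)[n] = σ_W Σ_{(i,X,μ)∈L} α_{(i,X,μ)} Σ_{ν∈⟦μ⟧} E_{i,j,ν}^{(ℓ)} z_{j,ν}^{(ℓ-1)}(X)[n], for j = 1, …, C_{ℓ-1}[n], are exchangeable in j. -/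

import Mathlib

open MeasureTheory ProbabilityTheory Finset

noncomputable section

variable {Ω : Type*} [MeasureSpace Ω]

/-- A random convolutional kernel field `U : ℕ → ℕ → (ℤ × ℤ) → Ω → ℝ` (output channel,
input channel, filter offset) with `m` relevant output channels is row-exchangeable if its
joint distribution is invariant under permutations of the output-channel index. -/
def KernelRowExchangeable (U : ℕ → ℕ → (ℤ × ℤ) → Ω → ℝ) (m : ℕ) : Prop :=
  ∀ σ : Equiv.Perm ℕ, (∀ i, m ≤ i → σ i = i) →
    IdentDistrib (fun ω => fun (i j : ℕ) (δ : ℤ × ℤ) => U (σ i) j δ ω)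
      (fun ω => fun (i j : ℕ) (δ : ℤ × ℤ) => U i j δ ω) volume volume

/-- Column-exchangeability of a random convolutional kernel field: invariance of the joint
distribution under permutations of the input-channel index. -/
def KernelColExchangeable (U : ℕ → ℕ → (ℤ × ℤ) → Ω → ℝ) (nc : ℕ) : Prop :=
  ∀ σ : Equiv.Perm ℕ, (∀ j, nc ≤ j → σ j = j) →
    IdentDistrib (fun ω => fun (i j : ℕ) (δ : ℤ × ℤ) => U i (σ j) δ ω)
      (fun ω => fun (i j : ℕ) (δ : ℤ × ℤ) => U i j δ ω) volume volume

/-- Index type for the joint family of per-layer convolutional kernels (`Sum.inl ℓ`) and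
per-layer bias vectors (`Sum.inr ℓ`). -/
def cnnFieldType : ℕ ⊕ ℕ → Type :=
  Sum.elim (fun _ => ℕ → ℕ → (ℤ × ℤ) → ℝ) (fun _ => ℕ → ℝ)

instance cnnFieldTypeMeasurableSpace : ∀ k, MeasurableSpace (cnnFieldType k)
  | Sum.inl _ => inferInstanceAs (MeasurableSpace (ℕ → ℕ → (ℤ × ℤ) → ℝ))
  | Sum.inr _ => inferInstanceAs (MeasurableSpace (ℕ → ℝ))

/-- The joint family of per-layer convolutional kernels and per-layer bias vectors. -/
def cnnFields (U : ℕ → ℕ → ℕ → (ℤ × ℤ) → Ω → ℝ) (b : ℕ → ℕ → Ω → ℝ) :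
    (k : ℕ ⊕ ℕ) → Ω → cnnFieldType k
  | Sum.inl ℓ => fun ω i j δ => U ℓ i j δ ω
  | Sum.inr ℓ => fun ω i => b ℓ i ω

section AuxLemmas

lemma map_tuple_eq_pi {ι : Type*} {E : ι → Type*} [∀ i, MeasurableSpace (E i)]
    [IsProbabilityMeasure (volume : Measure Ω)]
    (f : ∀ i, Ω → E i) (hf : ∀ i, Measurable (f i))
    (hindep : iIndepFun (m := fun i => inferInstance) f volume) (s : Finset ι) :
    Measure.map (fun ω => fun i : s => f i ω) volume
      = Measure.pi (fun i : s => Measure.map (f i.1) volume) := by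
  have hmeas : Measurable (fun ω => fun i : s => f i ω) :=
    measurable_pi_lambda _ fun i => hf i.1
  haveI : ∀ i : s, IsProbabilityMeasure (Measure.map (f i.1) volume) :=
    fun i => Measure.isProbabilityMeasure_map (hf i.1).aemeasurable
  refine (Measure.pi_eq fun t ht => ?_).symm
  classical
  set t' : ∀ i : ι, Set (E i) := fun i => if h : i ∈ s then t ⟨i, h⟩ else Set.univ with ht'
  have hpre : (fun ω => fun i : s => f i ω) ⁻¹' Set.pi Set.univ t
      = ⋂ i ∈ s, f i ⁻¹' t' i := by
    ext ω
    simp only [Set.mem_preimage, Set.mem_pi, Set.mem_univ, forall_true_left,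
      Set.mem_iInter, ht']
    constructor
    · intro hω i hi
      simp only [hi, dif_pos]
      exact hω ⟨i, hi⟩
    · intro hω i
      have := hω i.1 i.2
      simpa [i.2] using this
  rw [Measure.map_apply hmeas (MeasurableSet.univ_pi ht), hpre,
    hindep.measure_inter_preimage_eq_mul s (fun i hi => by
      simp only [ht', hi, dif_pos]; exact ht ⟨i, hi⟩)]
  rw [← Finset.prod_coe_sort s (fun i => (volume : Measure Ω) (f i ⁻¹' t' i))]
  refine Finset.prod_congr rfl fun i _ => ?_
  rw [Measure.map_apply (hf i.1) (ht i)]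
  congr 1
  simp [ht', i.2]

lemma identDistrib_tuple {ι : Type*} {E : ι → Type*} [∀ i, MeasurableSpace (E i)]
    [IsProbabilityMeasure (volume : Measure Ω)]
    (f g : ∀ i, Ω → E i) (hf : ∀ i, Measurable (f i)) (hg : ∀ i, Measurable (g i))
    (hif : iIndepFun (m := fun i => inferInstance) f volume)
    (hig : iIndepFun (m := fun i => inferInstance) g volume)
    (hid : ∀ i, IdentDistrib (f i) (g i) volume volume) :
    IdentDistrib (fun ω => fun i => f i ω) (fun ω => fun i => g i ω) volume volume := by
  have hmf : Measurable (fun ω => fun i => f i ω) := measurable_pi_lambda _ hf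
  have hmg : Measurable (fun ω => fun i => g i ω) := measurable_pi_lambda _ hg
  refine ⟨hmf.aemeasurable, hmg.aemeasurable, ?_⟩
  haveI : IsProbabilityMeasure (Measure.map (fun ω => fun i => f i ω) volume) :=
    Measure.isProbabilityMeasure_map hmf.aemeasurable
  haveI : IsProbabilityMeasure (Measure.map (fun ω => fun i => g i ω) volume) :=
    Measure.isProbabilityMeasure_map hmg.aemeasurable
  refine MeasureTheory.ext_of_generate_finite (measurableCylinders E)
    generateFrom_measurableCylinders.symm isPiSystem_measurableCylinders
    (fun u hu => ?_) (by simp)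
  obtain ⟨s, S, hS, rfl⟩ := (mem_measurableCylinders _).mp hu
  have hfpre : (fun ω => fun i => f i ω) ⁻¹' cylinder s S
      = (fun ω => fun i : s => f i ω) ⁻¹' S := rfl
  have hgpre : (fun ω => fun i => g i ω) ⁻¹' cylinder s S
      = (fun ω => fun i : s => g i ω) ⁻¹' S := rfl
  have hmf' : Measurable (fun ω => fun i : s => f i ω) :=
    measurable_pi_lambda _ fun i => hf i.1
  have hmg' : Measurable (fun ω => fun i : s => g i ω) :=
    measurable_pi_lambda _ fun i => hg i.1
  rw [Measure.map_apply hmf hS.cylinder, Measure.map_apply hmg hS.cylinder,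
    hfpre, hgpre,
    ← Measure.map_apply hmf' hS,
    ← Measure.map_apply hmg' hS,
    map_tuple_eq_pi f hf hif s, map_tuple_eq_pi g hg hig s]
  have heq : (fun i : s => Measure.map (f i.1) (volume : Measure Ω))
      = fun i : s => Measure.map (g i.1) (volume : Measure Ω) :=
    funext fun i => (hid i.1).map_eq
  rw [heq]

lemma perm_iid {f : ℕ → Ω → ℝ} [IsProbabilityMeasure (volume : Measure Ω)]
    (hm : ∀ i, Measurable (f i))
    (hind : iIndepFun (m := fun _ => inferInstance) f volume)
    (hid : ∀ i i', IdentDistrib (f i) (f i') volume volume) (σ : Equiv.Perm ℕ) :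
    IdentDistrib (fun ω => fun i => f (σ i) ω) (fun ω => fun i => f i ω) volume volume := by
  have hind' : iIndepFun (m := fun _ => inferInstance) (fun i => f (σ i)) volume := by
    rw [iIndepFun_iff_measure_inter_preimage_eq_mul] at hind ⊢
    intro S sets hsets
    classical
    have h1 : (⋂ i ∈ S, f (σ i) ⁻¹' sets i)
        = ⋂ i ∈ S.image σ, f i ⁻¹' sets (σ.symm i) := by
      rw [Finset.set_biInter_finset_image]
      exact Set.iInter₂_congr fun i _ => by rw [Equiv.symm_apply_apply]
    have h2 : (∏ i ∈ S, (volume : Measure Ω) (f (σ i) ⁻¹' sets i))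
        = ∏ i ∈ S.image σ, (volume : Measure Ω) (f i ⁻¹' sets (σ.symm i)) := by
      rw [Finset.prod_image (fun a _ b _ h => σ.injective h)]
      exact Finset.prod_congr rfl fun i _ => by rw [Equiv.symm_apply_apply]
    rw [h1, h2]
    exact hind (S.image σ) (fun i hi => by
      obtain ⟨j, hj, rfl⟩ := Finset.mem_image.mp hi
      rw [Equiv.symm_apply_apply]; exact hsets j hj)
  exact identDistrib_tuple _ _ (fun i => hm (σ i)) hm hind' hind
    (fun i => hid (σ i) i)

-- evaluation measurability
lemma meas_evalU (l i j : ℕ) (δ : ℤ × ℤ) :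
    Measurable fun f : (∀ k, cnnFieldType k) => f (Sum.inl l) i j δ := by
  have h1 : Measurable fun f : (∀ k, cnnFieldType k) => f (Sum.inl l) :=
    measurable_pi_apply _
  exact ((h1.eval (a := i)).eval (a := j)).eval (a := δ)

lemma meas_evalb (l i : ℕ) :
    Measurable fun f : (∀ k, cnnFieldType k) => f (Sum.inr l) i := by
  have h1 : Measurable fun f : (∀ k, cnnFieldType k) => f (Sum.inr l) :=
    measurable_pi_apply _
  exact h1.eval (a := i)

/-- The preactivations as a function of the kernel/bias fields. -/
def hhat {𝒳 : Type*} (emb : 𝒳 → ℕ → (ℤ × ℤ) → ℝ) (φ : ℝ → ℝ) (Cn : ℕ → ℕ)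
    (D : Finset (ℤ × ℤ)) : ℕ → ℕ → 𝒳 → (ℤ × ℤ) → (∀ k : ℕ ⊕ ℕ, cnnFieldType k) → ℝ
  | 0 => fun _ _ _ _ => 0
  | (ℓ' + 1) => fun i X μ f =>
      f (Sum.inr (ℓ' + 1)) i + ∑ j ∈ Finset.range (Cn ℓ'), ∑ δ ∈ D,
        f (Sum.inl (ℓ' + 1)) i j δ *
          (if ℓ' = 0 then emb X j (μ + δ) else φ (hhat emb φ Cn D ℓ' j X (μ + δ) f))

lemma hhat_measurable {𝒳 : Type*} (emb : 𝒳 → ℕ → (ℤ × ℤ) → ℝ) {φ : ℝ → ℝ}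
    (hφ : Measurable φ) (Cn : ℕ → ℕ) (D : Finset (ℤ × ℤ)) :
    ∀ ℓ' i X μ, Measurable (hhat emb φ Cn D ℓ' i X μ) := by
  intro ℓ'
  induction ℓ' with
  | zero => intro i X μ; simpa [hhat] using measurable_const
  | succ l ih =>
    intro i X μ
    simp only [hhat]
    refine (meas_evalb _ _).add ?_
    refine Finset.measurable_sum _ fun j _ => Finset.measurable_sum _ fun δ _ => ?_
    refine (meas_evalU _ _ _ _).mul ?_
    by_cases h0 : l = 0
    · simp [h0]
    · simp only [h0, if_false]; exact hφ.comp (ih j X (μ + δ))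

/-- Per-component permutation of the fields. -/
def permComp (ℓ : ℕ) (σ : Equiv.Perm ℕ) : (k : ℕ ⊕ ℕ) → cnnFieldType k → cnnFieldType k
  | Sum.inl l => fun x i j δ =>
      if l = ℓ then x i (σ j) δ else if l = ℓ - 1 then x (σ i) j δ else x i j δ
  | Sum.inr l => fun x i => if l = ℓ - 1 then x (σ i) else x i

lemma permComp_measurable (ℓ : ℕ) (σ : Equiv.Perm ℕ) (k : ℕ ⊕ ℕ) :
    Measurable (permComp ℓ σ k) := by
  cases k with
  | inl l =>
    refine measurable_pi_lambda _ fun i => measurable_pi_lambda _ fun j =>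
      measurable_pi_lambda _ fun δ => ?_
    simp only [permComp]
    split_ifs <;>
      exact (((measurable_pi_apply _).eval).eval)
  | inr l =>
    refine measurable_pi_lambda _ fun i => ?_
    simp only [permComp]
    split_ifs <;> exact measurable_pi_apply _

/-- Substituting the permuted fields into `hhat` permutes the channel index at layer `ℓ - 1`. -/
lemma hhat_perm {𝒳 : Type*} (emb : 𝒳 → ℕ → (ℤ × ℤ) → ℝ) (φ : ℝ → ℝ) (Cn : ℕ → ℕ)
    (D : Finset (ℤ × ℤ)) (ℓ : ℕ) (hℓ : 2 ≤ ℓ) (σ : Equiv.Perm ℕ)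
    (f : ∀ k : ℕ ⊕ ℕ, cnnFieldType k) :
    ∀ ℓ', 1 ≤ ℓ' → ℓ' ≤ ℓ - 1 → ∀ j X μ,
      hhat emb φ Cn D ℓ' j X μ (fun k => permComp ℓ σ k (f k))
        = hhat emb φ Cn D ℓ' (if ℓ' = ℓ - 1 then σ j else j) X μ f := by
  intro ℓ'
  induction ℓ' with
  | zero => omega
  | succ l ih =>
    intro _ hle j X μ
    have hne : ¬ (l + 1 = ℓ) := by omega
    simp only [hhat]
    congr 1
    · by_cases h : l + 1 = ℓ - 1 <;> simp [permComp, h, hne]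
    · refine Finset.sum_congr rfl fun j' _ => Finset.sum_congr rfl fun δ _ => ?_
      congr 1
      · by_cases h : l + 1 = ℓ - 1 <;>
          simp [permComp, h, hne, show ℓ - 1 ≠ ℓ by omega]
      · by_cases h0 : l = 0
        · simp [h0]
        · have hl1 : 1 ≤ l := by omega
          have hl2 : l ≤ ℓ - 1 := by omega
          have hll : ¬ (l = ℓ - 1) := by omega
          simp only [h0, if_false]
          rw [ih hl1 hl2 j' X (μ + δ)]
          simp [hll]

/-- `hhat` computes the preactivations. -/
lemma hhat_spec {𝒳 : Type*} (emb : 𝒳 → ℕ → (ℤ × ℤ) → ℝ) (φ : ℝ → ℝ)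
    (C : ℕ → ℕ → ℕ) (D : Finset (ℤ × ℤ))
    (U : ℕ → ℕ → ℕ → ℕ → (ℤ × ℤ) → Ω → ℝ) (b : ℕ → ℕ → Ω → ℝ)
    (h : ℕ → ℕ → ℕ → 𝒳 → (ℤ × ℤ) → Ω → ℝ)
    (hrec1 : ∀ n i X μ ω,
      h n 1 i X μ ω =
        b 1 i ω + ∑ j ∈ Finset.range (C 0 n), ∑ δ ∈ D, U n 1 i j δ ω * emb X j (μ + δ))
    (hrec : ∀ n ℓ', 1 ≤ ℓ' → ∀ i X μ ω,
      h n (ℓ' + 1) i X μ ω =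
        b (ℓ' + 1) i ω + ∑ j ∈ Finset.range (C ℓ' n), ∑ δ ∈ D,
          U n (ℓ' + 1) i j δ ω * φ (h n ℓ' j X (μ + δ) ω)) (n : ℕ) :
    ∀ ℓ', 1 ≤ ℓ' → ∀ i X μ ω,
      h n ℓ' i X μ ω
        = hhat emb φ (fun l => C l n) D ℓ' i X μ (fun k => cnnFields (U n) b k ω) := by
  intro ℓ'
  induction ℓ' with
  | zero => omega
  | succ l ih =>
    intro _ i X μ ω
    by_cases h0 : l = 0
    · subst h0
      simp only [hhat, if_pos rfl]
      exact hrec1 n i X μ ω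
    · have hl1 : 1 ≤ l := by omega
      simp only [hhat, h0, if_false]
      rw [hrec n l hl1 i X μ ω]
      congr 1
      refine Finset.sum_congr rfl fun j _ => Finset.sum_congr rfl fun δ _ => ?_
      rw [ih hl1 j X (μ + δ) ω]
      rfl

end AuxLemmas

/-- Exchangeability (in the input-channel index `j`) of the summands `γ_j^{(ℓ)}(α, L)[n]`
of the exchangeable-CLT argument for CNNs whose kernels are invariant under permutations
of the first and second (channel) indices, with mutually independent layers and iid bias
entries. -/
theorem cnn_gamma_summands_exchangeable
    [IsProbabilityMeasure (volume : Measure Ω)]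
    {𝒳 : Type*} (emb : 𝒳 → ℕ → (ℤ × ℤ) → ℝ) (φ : ℝ → ℝ) (hφ : Measurable φ)
    (σW : ℝ) (C : ℕ → ℕ → ℕ) (D : Finset (ℤ × ℤ))
    (U : ℕ → ℕ → ℕ → ℕ → (ℤ × ℤ) → Ω → ℝ) (b : ℕ → ℕ → Ω → ℝ)
    (hUmeas : ∀ n ℓ i j δ, Measurable (U n ℓ i j δ))
    (hbmeas : ∀ ℓ i, Measurable (b ℓ i))
    -- every kernel is invariant under permutations of its first and second indices
    (hexch : ∀ n ℓ', 1 ≤ ℓ' →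
      KernelRowExchangeable (U n ℓ') (C ℓ' n) ∧ KernelColExchangeable (U n ℓ') (C (ℓ' - 1) n))
    -- kernels and biases across layers are mutually independent
    (hindep : ∀ n, iIndepFun (m := cnnFieldTypeMeasurableSpace) (cnnFields (U n) b) volume)
    -- the biases have iid entries
    (hbiid : ∀ ℓ, iIndepFun (m := fun _ => inferInstance) (fun i => b ℓ i) volume)
    (hbid : ∀ ℓ i i', IdentDistrib (b ℓ i) (b ℓ i') volume volume)
    -- the preactivations h satisfy the CNN recursion
    (h : ℕ → ℕ → ℕ → 𝒳 → (ℤ × ℤ) → Ω → ℝ)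
    (hrec1 : ∀ n i X μ ω,
      h n 1 i X μ ω =
        b 1 i ω + ∑ j ∈ Finset.range (C 0 n), ∑ δ ∈ D, U n 1 i j δ ω * emb X j (μ + δ))
    (hrec : ∀ n ℓ', 1 ≤ ℓ' → ∀ i X μ ω,
      h n (ℓ' + 1) i X μ ω =
        b (ℓ' + 1) i ω + ∑ j ∈ Finset.range (C ℓ' n), ∑ δ ∈ D,
          U n (ℓ' + 1) i j δ ω * φ (h n ℓ' j X (μ + δ) ω))
    -- a fixed layer ℓ ≥ 2, finite index set L = {(idx p, inpX p, pix p)} and coefficients α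
    (ℓ : ℕ) (hℓ : 2 ≤ ℓ)
    (P : ℕ) (idx : Fin P → ℕ) (inpX : Fin P → 𝒳) (pix : Fin P → ℤ × ℤ) (α : Fin P → ℝ) :
    -- the summands γ_j are exchangeable over j ∈ {1, …, C_{ℓ-1}[n]}
    ∀ n, ∀ σ : Equiv.Perm ℕ, (∀ j, C (ℓ - 1) n ≤ j → σ j = j) →
      IdentDistrib
        (fun ω => fun j : ℕ =>
          σW * ∑ p, α p * ∑ δ ∈ D,
            (σW⁻¹ * Real.sqrt (C (ℓ - 1) n) * U n ℓ (idx p) (σ j) δ ω) *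
              φ (h n (ℓ - 1) (σ j) (inpX p) (pix p + δ) ω))
        (fun ω => fun j : ℕ =>
          σW * ∑ p, α p * ∑ δ ∈ D,
            (σW⁻¹ * Real.sqrt (C (ℓ - 1) n) * U n ℓ (idx p) j δ ω) *
              φ (h n (ℓ - 1) j (inpX p) (pix p + δ) ω))
        volume volume := by

  intro n σ hσ
  classical
  -- measurability of the field components
  have hTmeas : ∀ k, Measurable (fun ω => cnnFields (U n) b k ω) := by
    intro k
    cases k with
    | inl l =>
      exact measurable_pi_lambda _ fun i => measurable_pi_lambda _ fun j =>
        measurable_pi_lambda _ fun δ => hUmeas n l i j δ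
    | inr l => exact measurable_pi_lambda _ fun i => hbmeas l i
  have hgmeas : ∀ k, Measurable (fun ω => permComp ℓ σ k (cnnFields (U n) b k ω)) :=
    fun k => (permComp_measurable ℓ σ k).comp (hTmeas k)
  have hig : iIndepFun (m := fun k => inferInstance)
      (fun k => (permComp ℓ σ k) ∘ (cnnFields (U n) b k)) volume :=
    (hindep n).comp (permComp ℓ σ) (permComp_measurable ℓ σ)
  -- componentwise identical distribution
  have hidk : ∀ k, IdentDistrib (fun ω => permComp ℓ σ k (cnnFields (U n) b k ω))
      (fun ω => cnnFields (U n) b k ω) volume volume := by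
    intro k
    cases k with
    | inl l =>
      by_cases h1 : l = ℓ
      · subst h1
        have hcol := (hexch n l (by omega)).2 σ hσ
        have hfun : (fun ω => permComp l σ (Sum.inl l) (cnnFields (U n) b (Sum.inl l) ω))
            = fun ω => fun (i j : ℕ) (δ : ℤ × ℤ) => U n l i (σ j) δ ω := by
          funext ω i j δ
          simp [permComp, cnnFields]
        rw [hfun]
        exact hcol
      · by_cases h2 : l = ℓ - 1
        · subst h2
          have hrow := (hexch n (ℓ - 1) (by omega)).1 σ hσ
          have hfun : (fun ω => permComp ℓ σ (Sum.inl (ℓ - 1))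
                (cnnFields (U n) b (Sum.inl (ℓ - 1)) ω))
              = fun ω => fun (i j : ℕ) (δ : ℤ × ℤ) => U n (ℓ - 1) (σ i) j δ ω := by
            funext ω i j δ
            simp [permComp, cnnFields, show ¬ (ℓ - 1 = ℓ) by omega]
          rw [hfun]
          exact hrow
        · have hfun : (fun ω => permComp ℓ σ (Sum.inl l) (cnnFields (U n) b (Sum.inl l) ω))
              = fun ω => cnnFields (U n) b (Sum.inl l) ω := by
            funext ω
            simp [permComp, h1, h2]; rfl
          rw [hfun]
          exact IdentDistrib.refl (hTmeas _).aemeasurable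
    | inr l =>
      by_cases h2 : l = ℓ - 1
      · subst h2
        have hb := perm_iid (f := b (ℓ - 1)) (hbmeas (ℓ - 1)) (hbiid (ℓ - 1))
          (hbid (ℓ - 1)) σ
        have hfun : (fun ω => permComp ℓ σ (Sum.inr (ℓ - 1))
              (cnnFields (U n) b (Sum.inr (ℓ - 1)) ω))
            = fun ω => fun i : ℕ => b (ℓ - 1) (σ i) ω := by
          funext ω i
          simp [permComp, cnnFields]
        rw [hfun]
        exact hb
      · have hfun : (fun ω => permComp ℓ σ (Sum.inr l) (cnnFields (U n) b (Sum.inr l) ω))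
            = fun ω => cnnFields (U n) b (Sum.inr l) ω := by
          funext ω
          simp [permComp, h2]; rfl
        rw [hfun]
        exact IdentDistrib.refl (hTmeas _).aemeasurable
  have hbig : IdentDistrib (fun ω => fun k => permComp ℓ σ k (cnnFields (U n) b k ω))
      (fun ω => fun k => cnnFields (U n) b k ω) volume volume :=
    identDistrib_tuple _ _ hgmeas hTmeas hig (hindep n) hidk
  -- the observable
  set G : (∀ k : ℕ ⊕ ℕ, cnnFieldType k) → ℕ → ℝ := fun f j =>
    σW * ∑ p, α p * ∑ δ ∈ D,
      (σW⁻¹ * Real.sqrt (C (ℓ - 1) n) * f (Sum.inl ℓ) (idx p) j δ) *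
        φ (hhat emb φ (fun l => C l n) D (ℓ - 1) j (inpX p) (pix p + δ) f) with hGdef
  have hG : Measurable G := by
    refine measurable_pi_lambda _ fun j => Measurable.const_mul ?_ σW
    refine Finset.measurable_sum _ fun p _ => Measurable.const_mul ?_ (α p)
    refine Finset.measurable_sum _ fun δ _ => Measurable.mul ?_ ?_
    · exact (meas_evalU ℓ (idx p) j δ).const_mul _
    · exact hφ.comp (hhat_measurable emb hφ (fun l => C l n) D (ℓ - 1) j (inpX p) (pix p + δ))
  have final := hbig.comp hG
  have hspec := hhat_spec emb φ C D U b h hrec1 hrec n (ℓ - 1) (by omega)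
  have e2 : (G ∘ fun ω => fun k => cnnFields (U n) b k ω)
      = fun ω => fun j : ℕ =>
          σW * ∑ p, α p * ∑ δ ∈ D,
            (σW⁻¹ * Real.sqrt (C (ℓ - 1) n) * U n ℓ (idx p) j δ ω) *
              φ (h n (ℓ - 1) j (inpX p) (pix p + δ) ω) := by
    funext ω j
    simp only [Function.comp, hGdef]
    congr 1
    refine Finset.sum_congr rfl fun p _ => ?_
    congr 1
    refine Finset.sum_congr rfl fun δ _ => ?_
    rw [hspec j (inpX p) (pix p + δ) ω]
    rfl
  have e1 : (G ∘ fun ω => fun k => permComp ℓ σ k (cnnFields (U n) b k ω))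
      = fun ω => fun j : ℕ =>
          σW * ∑ p, α p * ∑ δ ∈ D,
            (σW⁻¹ * Real.sqrt (C (ℓ - 1) n) * U n ℓ (idx p) (σ j) δ ω) *
              φ (h n (ℓ - 1) (σ j) (inpX p) (pix p + δ) ω) := by
    funext ω j
    simp only [Function.comp, hGdef]
    congr 1
    refine Finset.sum_congr rfl fun p _ => ?_
    congr 1
    refine Finset.sum_congr rfl fun δ _ => ?_
    have hperm := hhat_perm emb φ (fun l => C l n) D ℓ hℓ σ
      (fun k => cnnFields (U n) b k ω) (ℓ - 1) (by omega) le_rfl j (inpX p) (pix p + δ)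
    rw [hperm, if_pos rfl, ← hspec (σ j) (inpX p) (pix p + δ) ω]
    congr 1
    simp [permComp, cnnFields]
  rw [e1, e2] at final
  exact final
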